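/- Let P and P̂ be two orthogonal projections of equal rank r on a separable Hilbert space H, with P the projection onto the top r eigenvectors of a non-negative self-adjoint trace-class operator A whose eigenvalues satisfy λ_r > λ_{r+1}, and P̂ the analogous projection for another non-negative self-adjoint trace-class operator Â that maximizes Tr(Â P̂) over rank-r projections. Then ‖P − P̂‖²_{HS} ≤ 2 Tr(A(P − P̂)) / (λ_r − λ_{r+1}). -/

import Mathlib

open RealInnerProductSpace

/-- Let `A`, `Ahat` be non-negative, self-adjoint, trace-class operators on a separable Hilbert
space `H`, with Hilbert bases `u`, `uh` of eigenvectors, decreasing summable eigenvalues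
`lam`, `lamh`, and spectral gap `lam (r-1) > lam r` of `A` (1-based: `λ_r > λ_{r+1}`).
Let `P` be the projection onto the top `r` eigenvectors of `A` and `Phat` the analogous
projection for `Ahat`, which maximizes `Tr(Ahat Q)` over rank-`r` orthogonal projections `Q`.
Then `‖P - Phat‖²_HS ≤ 2 Tr(A (P - Phat)) / (λ_r - λ_{r+1})`, with the Hilbert–Schmidt norm
and traces computed in the eigenbasis `u` of `A`. -/
theorem stmt_4 {H : Type*} [NormedAddCommGroup H] [InnerProductSpace ℝ H] [CompleteSpace H]
    (A Ahat : H →L[ℝ] H) (hA : IsSelfAdjoint A) (hAhat : IsSelfAdjoint Ahat)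
    (hposA : ∀ x : H, 0 ≤ ⟪A x, x⟫) (hposAhat : ∀ x : H, 0 ≤ ⟪Ahat x, x⟫)
    (lam lamh : ℕ → ℝ) (u uh : HilbertBasis ℕ ℝ H)
    (heigA : ∀ i, A (u i) = lam i • u i) (heigAh : ∀ i, Ahat (uh i) = lamh i • uh i)
    (hdecA : Antitone lam) (hdecAh : Antitone lamh)
    (htcA : Summable lam) (htcAh : Summable lamh)
    (r : ℕ) (hr : 0 < r) (hgap : lam r < lam (r - 1))
    (P Phat : H →L[ℝ] H)
    (hP : P = ∑ i : Fin r, (innerSL ℝ (u (i : ℕ))).smulRight (u (i : ℕ)))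
    (hPhat : Phat = ∑ i : Fin r, (innerSL ℝ (uh (i : ℕ))).smulRight (uh (i : ℕ)))
    (hmax : ∀ Q : H →L[ℝ] H,
      (∃ w : Fin r → H, Orthonormal ℝ w ∧ ∀ x, Q x = ∑ i, ⟪w i, x⟫ • w i) →
      (∑' i, ⟪(Ahat ∘L Q) (u i), u i⟫) ≤ ∑' i, ⟪(Ahat ∘L Phat) (u i), u i⟫) :
    (∑' i, ‖(P - Phat) (u i)‖ ^ 2)
      ≤ 2 * (∑' i, ⟪(A ∘L (P - Phat)) (u i), u i⟫) / (lam (r - 1) - lam r) := by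
  classical
  have huo := orthonormal_iff_ite.mp u.orthonormal
  have huho := orthonormal_iff_ite.mp uh.orthonormal
  have hPapp : ∀ x : H, P x = ∑ j : Fin r, ⟪u (j : ℕ), x⟫ • u (j : ℕ) := by
    intro x
    rw [hP, ContinuousLinearMap.sum_apply]
    simp [ContinuousLinearMap.smulRight_apply]
  have hPhapp : ∀ x : H, Phat x = ∑ j : Fin r, ⟪uh (j : ℕ), x⟫ • uh (j : ℕ) := by
    intro x
    rw [hPhat, ContinuousLinearMap.sum_apply]
    simp [ContinuousLinearMap.smulRight_apply]
  set c : ℕ → ℝ := fun i => ∑ j : Fin r, ⟪uh (j : ℕ), u i⟫ * ⟪uh (j : ℕ), u i⟫ with hcdef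
  -- P on basis vectors
  have hPu : ∀ i, i < r → P (u i) = u i := by
    intro i h
    rw [hPapp]
    rw [Finset.sum_eq_single (⟨i, h⟩ : Fin r)]
    · simp [huo, u.orthonormal.1 i]
    · intro j _ hj
      have hji : (j : ℕ) ≠ i := fun hji => hj (by ext; simpa using hji)
      simp [huo, hji]
    · simp
  have hPu0 : ∀ i, ¬ i < r → P (u i) = 0 := by
    intro i h
    rw [hPapp]
    apply Finset.sum_eq_zero
    intro j _
    have hji : (j : ℕ) ≠ i := by have := j.isLt; omega
    simp [huo, hji]
  have hPinner : ∀ i, ⟪P (u i), u i⟫ = if i < r then 1 else 0 := by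
    intro i
    by_cases h : i < r
    · rw [if_pos h, hPu i h]; simpa using huo i i
    · rw [if_neg h, hPu0 i h]; simp
  -- Phat inner products
  have hPhinner : ∀ x y : H, ⟪Phat x, y⟫ = ∑ j : Fin r, ⟪uh (j : ℕ), x⟫ * ⟪uh (j : ℕ), y⟫ := by
    intro x y
    rw [hPhapp, sum_inner]
    simp [real_inner_smul_left]
  have hPhc : ∀ i, ⟪Phat (u i), u i⟫ = c i := fun i => hPhinner _ _
  have hPhuh : ∀ (j : Fin r) (x : H), ⟪uh (j : ℕ), Phat x⟫ = ⟪uh (j : ℕ), x⟫ := by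
    intro j x
    rw [real_inner_comm (Phat x) (uh (j : ℕ)), hPhinner]
    rw [Finset.sum_eq_single j]
    · simp [huho, uh.orthonormal.1 (j : ℕ)]
    · intro k _ hk
      have hkj : (k : ℕ) ≠ (j : ℕ) := fun h => hk (by ext; simpa using h)
      simp [huho, hkj]
    · simp
  have hPhnorm : ∀ i, ‖Phat (u i)‖ ^ 2 = c i := by
    intro i
    rw [← real_inner_self_eq_norm_sq]
    calc ⟪Phat (u i), Phat (u i)⟫
        = ∑ j : Fin r, ⟪uh (j : ℕ), u i⟫ * ⟪uh (j : ℕ), Phat (u i)⟫ := hPhinner _ _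
      _ = c i := Finset.sum_congr rfl fun j _ => by rw [hPhuh]
  -- pointwise formulas
  have hNf : ∀ i, ‖(P - Phat) (u i)‖ ^ 2 = if i < r then 1 - c i else c i := by
    intro i
    rw [ContinuousLinearMap.sub_apply, norm_sub_sq_real]
    by_cases h : i < r
    · rw [if_pos h, hPu i h, hPhnorm]
      have h1 : ‖u i‖ ^ 2 = 1 := by
        rw [← real_inner_self_eq_norm_sq]; simpa using huo i i
      have h2 : ⟪u i, Phat (u i)⟫ = c i := by
        rw [real_inner_comm]; exact hPhc i
      rw [h1, h2]; ring
    · rw [if_neg h, hPu0 i h, hPhnorm]; simp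
  have hsymm := ContinuousLinearMap.isSelfAdjoint_iff_isSymmetric.mp hA
  have htf : ∀ i, ⟪(A ∘L (P - Phat)) (u i), u i⟫
      = lam i * ((if i < r then 1 else 0) - c i) := by
    intro i
    rw [ContinuousLinearMap.comp_apply]
    have hs : ⟪A ((P - Phat) (u i)), u i⟫ = ⟪(P - Phat) (u i), A (u i)⟫ :=
      hsymm ((P - Phat) (u i)) (u i)
    rw [hs, heigA i, real_inner_smul_right, ContinuousLinearMap.sub_apply, inner_sub_left,
      hPinner, hPhc]
  -- nonnegativity and bounds on c
  have hcnn : ∀ i, 0 ≤ c i := fun i => Finset.sum_nonneg fun j _ => mul_self_nonneg _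
  have hsummand : ∀ j : Fin r, Summable fun i => ⟪uh (j : ℕ), u i⟫ * ⟪uh (j : ℕ), u i⟫ := by
    intro j
    have := u.summable_inner_mul_inner (uh (j : ℕ)) (uh (j : ℕ))
    refine this.congr fun i => ?_
    rw [real_inner_comm (uh (j : ℕ)) (u i)]
  have hParse : ∀ j : Fin r, (∑' i, ⟪uh (j : ℕ), u i⟫ * ⟪uh (j : ℕ), u i⟫) = 1 := by
    intro j
    have h1 : (∑' i, ⟪uh (j : ℕ), u i⟫ * ⟪uh (j : ℕ), u i⟫)
        = ∑' i, ⟪uh (j : ℕ), u i⟫ * ⟪u i, uh (j : ℕ)⟫ := by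
      refine tsum_congr fun i => ?_
      rw [real_inner_comm (uh (j : ℕ)) (u i)]
    rw [h1, u.tsum_inner_mul_inner]
    simpa using huho j j
  have hsumc : Summable c := by
    simp only [hcdef]
    exact summable_sum fun j _ => hsummand j
  have htsumc : ∑' i, c i = (r : ℝ) := by
    rw [hcdef, Summable.tsum_finsetSum fun j _ => hsummand j]
    simp [hParse]
  have hc1 : ∀ i, c i ≤ 1 := by
    intro i
    have hs : Summable fun j : ℕ => ⟪u i, uh j⟫ * ⟪uh j, u i⟫ :=
      uh.summable_inner_mul_inner (u i) (u i)
    have ht : (∑' j : ℕ, ⟪u i, uh j⟫ * ⟪uh j, u i⟫) = 1 := by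
      rw [uh.tsum_inner_mul_inner]; simpa using huo i i
    calc c i = ∑ j ∈ Finset.range r, ⟪u i, uh j⟫ * ⟪uh j, u i⟫ := by
          simp only [hcdef]
          rw [Fin.sum_univ_eq_sum_range (fun j => ⟪uh j, u i⟫ * ⟪uh j, u i⟫) r]
          exact Finset.sum_congr rfl fun j _ => by rw [real_inner_comm (u i) (uh j)]
      _ ≤ ∑' j : ℕ, ⟪u i, uh j⟫ * ⟪uh j, u i⟫ := by
          refine Summable.sum_le_tsum _ (fun j _ => ?_) hs
          rw [← real_inner_comm (u i) (uh j)]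
          exact mul_self_nonneg _
      _ = 1 := ht
  have hlamnn : ∀ i, 0 ≤ lam i := by
    intro i
    have h := hposA (u i)
    rw [heigA i, real_inner_smul_left] at h
    have h1 : ⟪u i, u i⟫ = (1 : ℝ) := by simpa using huo i i
    rw [h1, mul_one] at h
    exact h
  -- LHS computation
  set d : ℕ → ℝ := fun i => if i < r then 1 - 2 * c i else 0 with hddef
  have hsumd : Summable d :=
    summable_of_ne_finset_zero (s := Finset.range r)
      fun i hi => if_neg (by simpa using hi)
  have htsumd : ∑' i, d i = ∑ i ∈ Finset.range r, (1 - 2 * c i) := by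
    rw [tsum_eq_sum (s := Finset.range r) fun i hi => if_neg (by simpa using hi)]
    exact Finset.sum_congr rfl fun i hi => if_pos (Finset.mem_range.mp hi)
  have hNd : ∀ i, (if i < r then 1 - c i else c i) = c i + d i := by
    intro i; simp only [hddef]; split_ifs <;> ring
  set S : ℝ := ∑' i : {x // x ∉ Finset.range r}, c ↑i with hSdef
  have hsplitc : ∑ i ∈ Finset.range r, c i + S = ∑' i, c i :=
    Summable.sum_add_tsum_subtype_compl hsumc (Finset.range r)
  have hcr : ∑ i ∈ Finset.range r, c i = (r : ℝ) - S := by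
    rw [htsumc] at hsplitc; linarith
  have hLHS : (∑' i, ‖(P - Phat) (u i)‖ ^ 2) = 2 * S := by
    rw [tsum_congr hNf]
    have h1 : (∑' i, (if i < r then 1 - c i else c i)) = (∑' i, c i) + ∑' i, d i := by
      rw [← Summable.tsum_add hsumc hsumd]
      exact tsum_congr hNd
    rw [h1, htsumc, htsumd]
    have h2 : ∑ i ∈ Finset.range r, (1 - 2 * c i)
        = (r : ℝ) - 2 * ∑ i ∈ Finset.range r, c i := by
      rw [Finset.sum_sub_distrib, ← Finset.mul_sum]
      simp
    rw [h2, hcr]; ring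
  -- RHS computation
  set g1 : ℕ → ℝ := fun i => lam i * c i with hg1def
  set g2 : ℕ → ℝ := fun i => if i < r then lam i else 0 with hg2def
  have hsumg1 : Summable g1 := by
    refine Summable.of_nonneg_of_le (fun i => mul_nonneg (hlamnn i) (hcnn i))
      (fun i => ?_) htcA
    exact mul_le_of_le_one_right (hlamnn i) (hc1 i)
  have hsumg2 : Summable g2 :=
    summable_of_ne_finset_zero (s := Finset.range r)
      fun i hi => if_neg (by simpa using hi)
  have htg : ∀ i, lam i * ((if i < r then 1 else 0) - c i) = g2 i - g1 i := by
    intro i; simp only [hg1def, hg2def]; split_ifs <;> ring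
  have htsumg2 : ∑' i, g2 i = ∑ i ∈ Finset.range r, lam i := by
    rw [tsum_eq_sum (s := Finset.range r) fun i hi => if_neg (by simpa using hi)]
    exact Finset.sum_congr rfl fun i hi => if_pos (Finset.mem_range.mp hi)
  set S1 : ℝ := ∑' i : {x // x ∉ Finset.range r}, g1 ↑i with hS1def
  have hsplit1 : ∑ i ∈ Finset.range r, g1 i + S1 = ∑' i, g1 i :=
    Summable.sum_add_tsum_subtype_compl hsumg1 (Finset.range r)
  have hRHS : (∑' i, ⟪(A ∘L (P - Phat)) (u i), u i⟫)
      = ∑ i ∈ Finset.range r, lam i * (1 - c i) - S1 := by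
    rw [tsum_congr htf]
    have h1 : (∑' i, lam i * ((if i < r then 1 else 0) - c i))
        = (∑' i, g2 i) - ∑' i, g1 i := by
      rw [← Summable.tsum_sub hsumg2 hsumg1]
      exact tsum_congr htg
    rw [h1, htsumg2, ← hsplit1]
    simp only [hg1def]
    have : ∑ i ∈ Finset.range r, lam i * (1 - c i)
        = ∑ i ∈ Finset.range r, lam i - ∑ i ∈ Finset.range r, lam i * c i := by
      rw [← Finset.sum_sub_distrib]
      exact Finset.sum_congr rfl fun i _ => by ring
    rw [this]; ring
  -- bounds
  have hS0 : 0 ≤ S := tsum_nonneg fun i => hcnn i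
  have hsum1c : ∑ i ∈ Finset.range r, (1 - c i) = S := by
    rw [Finset.sum_sub_distrib]
    simp [hcr]
  have hb1 : lam (r - 1) * S ≤ ∑ i ∈ Finset.range r, lam i * (1 - c i) := by
    rw [← hsum1c, Finset.mul_sum]
    refine Finset.sum_le_sum fun i hi => ?_
    have hi' : i ≤ r - 1 := by have := Finset.mem_range.mp hi; omega
    exact mul_le_mul_of_nonneg_right (hdecA hi') (by linarith [hc1 i])
  have hsumcsub : Summable fun i : {x // x ∉ Finset.range r} => c ↑i :=
    hsumc.subtype _
  have hb2 : S1 ≤ lam r * S := by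
    rw [hS1def, hSdef, ← hsumcsub.tsum_mul_left (lam r)]
    refine Summable.tsum_le_tsum (fun i => ?_) (hsumg1.subtype _) (hsumcsub.mul_left _)
    have hir : r ≤ (i : ℕ) := by
      have := i.2; simp only [Finset.mem_range] at this; omega
    exact mul_le_mul_of_nonneg_right (hdecA hir) (hcnn _)
  have hgap' : 0 < lam (r - 1) - lam r := by linarith
  have key : (lam (r - 1) - lam r) * S
      ≤ ∑' i, ⟪(A ∘L (P - Phat)) (u i), u i⟫ := by
    rw [hRHS]; linarith
  rw [hLHS, le_div_iff₀ hgap']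
  nlinarith [key, hS0]
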